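/- arXiv:1902.01438 — 6 statements merged into one kernel-verified Lean document; each statement's English description precedes it below -/
import Mathlib

section
/- Let Γ be a finite simplicial graph with a pre-order ≤ on its vertices defined by u ≤ v if and only if lk(u) ⊆ st(v) (where st(v) = {v} ∪ lk(v)). If X is a ≤-equivalence class containing at least three vertices, then X is either a clique or has no edges: that is, if u, v ∈ X are adjacent and w ∈ X is a third vertex, then w is adjacent to both u and v. -/
variable {V : Type*} [Fintype V]

/-- The star of a vertex: the vertex together with its link (neighbor set). -/
def stS (Γ : SimpleGraph V) (v : V) : Set V := insert v (Γ.neighborSet v)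

/-- The pre-order `u ≤ v` iff `lk(u) ⊆ st(v)`. -/
def leD (Γ : SimpleGraph V) (u v : V) : Prop := Γ.neighborSet u ⊆ stS Γ v

/-- `u` and `v` are equivalent: `u ≤ v` and `v ≤ u`. -/
def equivD (Γ : SimpleGraph V) (u v : V) : Prop := leD Γ u v ∧ leD Γ v u

/-- If `X` is a `≤`-equivalence class containing at least three vertices, then `X` is either a
clique or has no edges: if `u, v ∈ X` are adjacent and `w ∈ X` is a third vertex, then `w` is
adjacent to both `u` and `v`. -/
theorem equivalence_class_clique_or_edgeless (Γ : SimpleGraph V) (X : Set V)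
    (hX : ∀ u ∈ X, ∀ v : V, v ∈ X ↔ equivD Γ u v)
    (u v w : V) (hu : u ∈ X) (hv : v ∈ X) (hw : w ∈ X)
    (hadj : Γ.Adj u v) (hwu : w ≠ u) (hwv : w ≠ v) :
    Γ.Adj w u ∧ Γ.Adj w v := by
  have huw : equivD Γ u w := ((hX u hu w).mp hw)
  have hvw : equivD Γ v w := ((hX v hv w).mp hw)
  constructor
  · have := hvw.1 (show u ∈ Γ.neighborSet v from hadj.symm)
    rcases this with h | h
    · exact absurd h.symm hwu
    · exact h
  · have := huw.1 (show v ∈ Γ.neighborSet u from hadj)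
    rcases this with h | h
    · exact absurd h.symm hwv
    · exact h
end

section
/- Let Γ be a connected finite simplicial graph that is not equal to the star of any vertex, with the pre-order u ≤ v iff lk(u) ⊆ st(v). Then for every vertex v of Γ there exists a vertex w ∈ lk(v) that is maximal with respect to ≤ (i.e., for every z with w ≤ z, also z ≤ w). -/
variable {V : Type*} [Fintype V]

lemma leD_refl (Γ : SimpleGraph V) (u : V) : leD Γ u u :=
  fun _ hx => Set.mem_insert_of_mem _ hx

lemma leD_trans (Γ : SimpleGraph V) {u v w : V}
    (h1 : leD Γ u v) (h2 : leD Γ v w) : leD Γ u w := by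
  intro x hx
  have hx' : Γ.Adj u x := hx
  rcases Set.mem_insert_iff.mp (h1 hx) with rfl | hxv
  · -- x = v : need v ∈ stS Γ w
    have huv : u ∈ Γ.neighborSet x := hx'.symm
    rcases Set.mem_insert_iff.mp (h2 huv) with rfl | huw
    · -- u = w
      exact Set.mem_insert_of_mem _ hx
    · -- u adj w
      have hwu : Γ.Adj u w := (huw : Γ.Adj w u).symm
      rcases Set.mem_insert_iff.mp (h1 hwu) with rfl | hwv
      · exact Set.mem_insert _ _
      · exact Set.mem_insert_of_mem _ (hwv : Γ.Adj x w).symm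
  · exact h2 hxv

lemma exists_exit (Γ : SimpleGraph V) (v : V) {x u : V} (p : Γ.Walk x u)
    (hx : x ∈ stS Γ v) (hu : u ∉ stS Γ v) :
    ∃ a b, Γ.Adj a b ∧ a ∈ stS Γ v ∧ b ∉ stS Γ v := by
  induction p with
  | nil => exact absurd hx hu
  | @cons a b c h q ih =>
    by_cases hy : b ∈ stS Γ v
    · exact ih hy hu
    · exact ⟨a, b, h, hx, hy⟩

/-- If `Γ` is connected and not the star of any vertex, then every vertex has a `≤`-maximal
vertex in its link. -/
theorem maximal_vertex_in_link (Γ : SimpleGraph V)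
    (hconn : Γ.Connected) (hnostar : ¬ ∃ v : V, stS Γ v = Set.univ) (v : V) :
    ∃ w ∈ Γ.neighborSet v, ∀ z : V, leD Γ w z → leD Γ z w := by
  classical
  have hexu : ∃ u, u ∉ stS Γ v := by
    by_contra h
    push_neg at h
    exact hnostar ⟨v, Set.eq_univ_of_forall h⟩
  obtain ⟨u, hu⟩ := hexu
  obtain ⟨p⟩ := hconn v u
  obtain ⟨a, b, hab, ha, hb⟩ := exists_exit Γ v p (Set.mem_insert v _) hu
  have hav : Γ.Adj v a := by
    rcases Set.mem_insert_iff.mp ha with rfl | h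
    · exact absurd (Set.mem_insert_of_mem _ (hab : b ∈ Γ.neighborSet _)) hb
    · exact h
  set S : Finset V := Finset.univ.filter (fun z => leD Γ a z) with hSdef
  set f : V → ℕ := fun z => (Finset.univ.filter (fun t => leD Γ z t)).card with hfdef
  have hS : S.Nonempty := ⟨a, by simp [hSdef, leD_refl]⟩
  obtain ⟨m, hmS, hmin⟩ := S.exists_min_image f hS
  have ham : leD Γ a m := (Finset.mem_filter.mp hmS).2
  have hvm : Γ.Adj v m := by
    have hv : v ∈ stS Γ m := ham (hav.symm : v ∈ Γ.neighborSet a)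
    rcases Set.mem_insert_iff.mp hv with rfl | h
    · exact absurd (ham (hab : b ∈ Γ.neighborSet a)) hb
    · exact (h : Γ.Adj m v).symm
  refine ⟨m, hvm, fun z hmz => ?_⟩
  have haz : leD Γ a z := leD_trans Γ ham hmz
  have hsub : (Finset.univ.filter (fun t => leD Γ z t)) ⊆
      (Finset.univ.filter (fun t => leD Γ m t)) := by
    intro t ht
    simp only [Finset.mem_filter, Finset.mem_univ, true_and] at ht ⊢
    exact leD_trans Γ hmz ht
  have h2 : f m ≤ f z := hmin z (Finset.mem_filter.mpr ⟨Finset.mem_univ _, haz⟩)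
  have heq := Finset.eq_of_subset_of_card_le hsub h2
  have hm : m ∈ Finset.univ.filter (fun t => leD Γ z t) := by
    rw [heq]
    exact Finset.mem_filter.mpr ⟨Finset.mem_univ _, leD_refl Γ m⟩
  exact (Finset.mem_filter.mp hm).2
end

section
/- Let 𝒢 be a graph product of cyclic groups, x a vertex of infinite order with x ≤ y (so R_x^y exists), and C a union of connected components of Γ \ st(x) with y ∉ C ∪ st(x). Then in Aut(𝒢) the relation R_x^{y^{-1}} π^x_C R_x^y = π^{y^{-1}}_C π^x_C holds, where π^{y^{-1}}_C conjugates each element of C by y^{-1}. -/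
variable {V : Type*} [Fintype V]

/-- Relators for the graph product of cyclic groups over the labeled graph `(Γ, o)`:
commutators of adjacent generators, and `v ^ o v` for finite-order vertices
(`o v = 0` means the vertex group is infinite cyclic). -/
def gpRels (Γ : SimpleGraph V) (o : V → ℕ) : Set (FreeGroup V) :=
  {r | (∃ u v, Γ.Adj u v ∧
          r = FreeGroup.of u * FreeGroup.of v * (FreeGroup.of u)⁻¹ * (FreeGroup.of v)⁻¹) ∨
       ∃ v, o v ≠ 0 ∧ r = FreeGroup.of v ^ (o v)}

/-- The graph product of cyclic groups `ℤ/o(v)` over `(Γ, o)` (`o v = 0` meaning `ℤ`). -/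
abbrev GP (Γ : SimpleGraph V) (o : V → ℕ) : Type _ := PresentedGroup (gpRels Γ o)

/-- The generator of the graph product corresponding to a vertex. -/
def gen (Γ : SimpleGraph V) (o : V → ℕ) (v : V) : GP Γ o := PresentedGroup.of v

/-- `φ` is the transvection `R_u^{v^k} : u ↦ u·v^k`, fixing all other vertex generators. -/
def IsTransv (Γ : SimpleGraph V) (o : V → ℕ) (φ : MulAut (GP Γ o)) (u v : V) (k : ℤ) : Prop :=
  φ (gen Γ o u) = gen Γ o u * gen Γ o v ^ k ∧ ∀ w, w ≠ u → φ (gen Γ o w) = gen Γ o w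

/-- `φ` is the partial conjugation `π^v_C`, sending each generator `z ∈ C` to `v z v⁻¹`
and fixing all other vertex generators. -/
def IsPC (Γ : SimpleGraph V) (o : V → ℕ) (φ : MulAut (GP Γ o)) (v : V) (C : Set V) : Prop :=
  (∀ z ∈ C, φ (gen Γ o z) = gen Γ o v * gen Γ o z * (gen Γ o v)⁻¹) ∧
  ∀ z ∉ C, φ (gen Γ o z) = gen Γ o z

/-- `C` is a union of connected components of `Γ \ st(v)`. -/
def IsUnionComponents (Γ : SimpleGraph V) (v : V) (C : Set V) : Prop :=
  C ∩ stS Γ v = ∅ ∧ ∀ a b, Γ.Adj a b → a ∈ C → b ∉ stS Γ v → b ∈ C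

/-- If `o(x) = ∞`, `lk(x) ⊆ st(y)` and `C` is a union of components of `Γ \ st(x)` with
`y ∉ C ∪ st(x)`, then `R_x^{y⁻¹} π^x_C R_x^{y} = π^{y⁻¹}_C π^x_C` in `Aut(𝒢)`. -/
theorem transvection_conjugate_of_partial_conjugation (Γ : SimpleGraph V) (o : V → ℕ)
    (x y : V) (hx : o x = 0) (hle : Γ.neighborSet x ⊆ stS Γ y)
    (C : Set V) (hC : IsUnionComponents Γ x C) (hy : y ∉ C ∪ stS Γ x)
    (ρ ρ' πx πy : MulAut (GP Γ o))
    (hρ : IsTransv Γ o ρ x y 1) (hρ' : IsTransv Γ o ρ' x y (-1))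
    (hπx : IsPC Γ o πx x C)
    (hπy : (∀ z ∈ C, πy (gen Γ o z) = (gen Γ o y)⁻¹ * gen Γ o z * gen Γ o y) ∧
        ∀ z ∉ C, πy (gen Γ o z) = gen Γ o z) :
    ρ' * πx * ρ = πy * πx := by
  have hxC : x ∉ C := by
    intro h
    have : x ∈ C ∩ stS Γ x := ⟨h, Set.mem_insert _ _⟩
    simp [hC.1] at this
  have hyC : y ∉ C := fun h => hy (Or.inl h)
  apply MulEquiv.toMonoidHom_injective
  apply PresentedGroup.ext
  intro w
  show (ρ' * πx * ρ) (gen Γ o w) = (πy * πx) (gen Γ o w)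
  simp only [MulAut.mul_apply]
  by_cases hw : w = x
  · subst hw
    rw [hπx.2 w hxC, hπy.2 w hxC, hρ.1, zpow_one, map_mul, hπx.2 w hxC, hπx.2 y hyC,
      map_mul, hρ'.1, hρ'.2 y (fun h => hy (Or.inr (h ▸ Set.mem_insert _ _)))]
    group
  · by_cases hwC : w ∈ C
    · simp only [hρ.2 w hw, hπx.1 w hwC, map_mul, map_inv, hρ'.1, hρ'.2 w hw,
        hπy.1 w hwC, hπy.2 x hxC]
      group
    · rw [hρ.2 w hw, hπx.2 w hwC, hρ'.2 w hw, hπy.2 w hwC]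
end

section
/- Let W be a graph product of cyclic groups over a finite labeled graph (Γ, o) in which every vertex has finite order. If K and K' are maximal finite special subgroups (generated by maximal cliques of Γ) and φ is an automorphism of W acting trivially on the abelianization of W with φ(K) = K', then K = K' and φ restricted to K is the identity. -/
variable {V : Type*} [Fintype V]

section Aux

set_option linter.unusedSectionVars false

variable (Γ : SimpleGraph V) (o : V → ℕ)

lemma rel_eq_one {r : FreeGroup V} (h : r ∈ gpRels Γ o) :
    PresentedGroup.mk (gpRels Γ o) r = 1 :=
  (QuotientGroup.eq_one_iff _).mpr (Subgroup.subset_normalClosure h)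

lemma gen_pow_order (v : V) (h : o v ≠ 0) : gen Γ o v ^ (o v) = 1 := by
  have := rel_eq_one Γ o (Or.inr ⟨v, h, rfl⟩)
  rwa [map_pow] at this

lemma gen_comm {u v : V} (h : Γ.Adj u v) : Commute (gen Γ o u) (gen Γ o v) := by
  have := rel_eq_one Γ o (Or.inl ⟨u, v, h, rfl⟩)
  simp only [map_mul, map_inv] at this
  have h2 : gen Γ o u * gen Γ o v * ((gen Γ o v) * (gen Γ o u))⁻¹ = 1 := by
    rw [mul_inv_rev]; simp only [mul_assoc] at this ⊢; exact this
  exact (mul_inv_eq_one.mp h2)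

variable [DecidableEq V]

/-- The homomorphism to the direct product of the cyclic groups,
realizing the abelianization. -/
def psi : GP Γ o →* (∀ v : V, Multiplicative (ZMod (o v))) :=
  PresentedGroup.toGroup (f := fun v => Pi.mulSingle v (Multiplicative.ofAdd (1 : ZMod (o v))))
    (by
      rintro r (⟨u, v, hadj, rfl⟩ | ⟨v, hv, rfl⟩)
      · simp only [map_mul, map_inv, FreeGroup.lift_apply_of]
        rw [mul_comm (Pi.mulSingle u _)]
        group
      · simp only [map_pow, FreeGroup.lift_apply_of, ← Pi.mulSingle_pow]
        convert Pi.mulSingle_one v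
        rw [← ofAdd_nsmul, nsmul_eq_mul, mul_one, ZMod.natCast_self, ofAdd_zero])

@[simp] lemma psi_gen (v : V) :
    psi Γ o (gen Γ o v) = Pi.mulSingle v (Multiplicative.ofAdd (1 : ZMod (o v))) :=
  PresentedGroup.toGroup.of _

/-- The inclusion of the cyclic group `ZMod (o v)` into `GP Γ o` via `gen v`. -/
def comp1 (v : V) (hv : o v ≠ 0) : Multiplicative (ZMod (o v)) →* GP Γ o :=
  AddMonoidHom.toMultiplicativeLeft
    (ZMod.lift (o v) ⟨zmultiplesHom (Additive (GP Γ o)) (Additive.ofMul (gen Γ o v)), by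
      simp only [zmultiplesHom_apply]
      rw [← ofMul_zpow]
      norm_cast
      rw [gen_pow_order Γ o v hv, ofMul_one]⟩)

lemma comp1_intCast (v : V) (hv : o v ≠ 0) (m : ℤ) :
    comp1 Γ o v hv (Multiplicative.ofAdd ((m : ZMod (o v)))) = gen Γ o v ^ m := by
  change Additive.toMul (ZMod.lift (o v) _ (Multiplicative.toAdd (Multiplicative.ofAdd (m : ZMod (o v))))) = _
  simp [comp1, AddMonoidHom.toMultiplicativeLeft, ZMod.lift_coe, zmultiplesHom_apply,
    ← ofMul_zpow]

lemma comp1_mem_zpowers (v : V) (hv : o v ≠ 0) (x : Multiplicative (ZMod (o v))) :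
    comp1 Γ o v hv x ∈ Subgroup.zpowers (gen Γ o v) := by
  obtain ⟨m, hm⟩ := ZMod.intCast_surjective (x.toAdd)
  have : x = Multiplicative.ofAdd ((m : ZMod (o v))) := by rw [hm]; rfl
  rw [this, comp1_intCast]
  exact Subgroup.zpow_mem_zpowers _ _

lemma comp1_ofAdd_one (v : V) (hv : o v ≠ 0) :
    comp1 Γ o v hv (Multiplicative.ofAdd (1 : ZMod (o v))) = gen Γ o v := by
  have := comp1_intCast Γ o v hv 1
  simpa using this

lemma psi_comp1 (v : V) (hv : o v ≠ 0) (x : Multiplicative (ZMod (o v))) :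
    psi Γ o (comp1 Γ o v hv x) = Pi.mulSingle v x := by
  obtain ⟨m, hm⟩ := ZMod.intCast_surjective x.toAdd
  have hx : x = Multiplicative.ofAdd ((m : ZMod (o v))) := by rw [hm]; rfl
  rw [hx, comp1_intCast, map_zpow, psi_gen, ← Pi.mulSingle_zpow]
  rw [← ofAdd_zsmul]
  norm_num

end Aux

/-- In a graph product of finite cyclic groups of prime-power order, if `K, K'` are maximal
finite special subgroups (generated by maximal cliques) and `φ` is an automorphism acting
trivially on the abelianization with `φ(K) = K'`, then `K = K'` and `φ` restricts to the
identity on `K`. -/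
theorem IA_fixes_maximal_finite_special_subgroups (Γ : SimpleGraph V) (o : V → ℕ)
    (ho : ∀ v : V, IsPrimePow (o v))
    (s t : Set V)
    (hs : Γ.IsClique s) (hsmax : ∀ s' : Set V, Γ.IsClique s' → s ⊆ s' → s' = s)
    (ht : Γ.IsClique t) (htmax : ∀ t' : Set V, Γ.IsClique t' → t ⊆ t' → t' = t)
    (φ : MulAut (GP Γ o))
    (hab : ∀ g : GP Γ o, Abelianization.of (φ g) = Abelianization.of g)
    (hmap : (Subgroup.closure (gen Γ o '' s)).map φ.toMonoidHom
        = Subgroup.closure (gen Γ o '' t)) :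
    Subgroup.closure (gen Γ o '' s) = Subgroup.closure (gen Γ o '' t) ∧
    ∀ g ∈ Subgroup.closure (gen Γ o '' s), φ g = g := by
  classical
  haveI : Fintype ↥s := Fintype.ofFinite ↥s
  set K := Subgroup.closure (gen Γ o '' s) with hK
  have hone : ∀ v, o v ≠ 0 := fun v => (ho v).pos.ne'
  -- the coproduct of the cyclic subgroups over the clique `s`
  set Φ : ∀ i : ↥s, Multiplicative (ZMod (o ↑i)) →* GP Γ o :=
    fun i => comp1 Γ o ↑i (hone ↑i) with hΦ
  have hcomm : Pairwise fun i j : ↥s => ∀ x y, Commute (Φ i x) (Φ j y) := by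
    intro i j hij x y
    obtain ⟨a, ha⟩ := Subgroup.mem_zpowers_iff.mp (comp1_mem_zpowers Γ o ↑i (hone ↑i) x)
    obtain ⟨b, hb⟩ := Subgroup.mem_zpowers_iff.mp (comp1_mem_zpowers Γ o ↑j (hone ↑j) y)
    rw [hΦ, ← ha, ← hb]
    exact (gen_comm Γ o (hs i.2 j.2 (fun h => hij (Subtype.ext h)))).zpow_zpow a b
  set ρ : (∀ i : ↥s, Multiplicative (ZMod (o ↑i))) →* GP Γ o :=
    MonoidHom.noncommPiCoprod Φ hcomm with hρ
  have hKrange : K ≤ ρ.range := by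
    rw [hK, Subgroup.closure_le]
    rintro _ ⟨v, hv, rfl⟩
    refine ⟨Pi.mulSingle ⟨v, hv⟩ (Multiplicative.ofAdd (1 : ZMod (o v))), ?_⟩
    rw [hρ, MonoidHom.noncommPiCoprod_mulSingle]
    exact comp1_ofAdd_one Γ o v (hone v)
  -- the extension-by-one homomorphism
  set j : (∀ i : ↥s, Multiplicative (ZMod (o ↑i))) →* (∀ v, Multiplicative (ZMod (o v))) :=
    { toFun := fun k v => if h : v ∈ s then k ⟨v, h⟩ else 1
      map_one' := by funext v; by_cases h : v ∈ s <;> simp [h]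
      map_mul' := fun a b => by funext v; by_cases h : v ∈ s <;> simp [h] } with hj
  have hcompj : (psi Γ o).comp ρ = j := by
    apply MonoidHom.functions_ext
    intro i x
    rw [MonoidHom.comp_apply, hρ, MonoidHom.noncommPiCoprod_mulSingle, hΦ, psi_comp1]
    funext v
    by_cases h : v ∈ s
    · rcases eq_or_ne v ↑i with rfl | hne
      · have hi : (⟨(i : V), h⟩ : ↥s) = i := Subtype.ext rfl
        simp [hj, h, hi]
      · have hi : (⟨v, h⟩ : ↥s) ≠ i := fun hh => hne (by rw [← hh])
        simp [hj, h, Pi.mulSingle_eq_of_ne hne, Pi.mulSingle_eq_of_ne hi]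
    · have hne : v ≠ ↑i := fun hh => h (hh ▸ i.2)
      simp [hj, h, Pi.mulSingle_eq_of_ne hne]
  have hpsiρ : ∀ k, psi Γ o (ρ k) = j k := fun k => by
    rw [← MonoidHom.comp_apply, hcompj]
  have hjinj : Function.Injective j := by
    intro a b hab'
    funext i
    have := congrFun hab' ↑i
    simp only [hj, MonoidHom.coe_mk, OneHom.coe_mk, dif_pos i.2] at this
    exact this
  have habψ : ∀ g, psi Γ o (φ g) = psi Γ o g := fun g => by
    have h1 := congrArg (Abelianization.lift (psi Γ o)) (hab g)
    simpa using h1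
  have hsub : t ⊆ s := by
    intro v hv
    by_contra hvs
    have hgen : gen Γ o v ∈ K.map φ.toMonoidHom := by
      rw [hmap]; exact Subgroup.subset_closure ⟨v, hv, rfl⟩
    obtain ⟨g, hgK, hgeq⟩ := hgen
    obtain ⟨k, rfl⟩ := hKrange hgK
    have h1 : psi Γ o (gen Γ o v) = j k := by
      rw [← hgeq]
      show psi Γ o (φ (ρ k)) = j k
      rw [habψ, hpsiρ]
    have h2 := congrFun h1 v
    rw [psi_gen, Pi.mulSingle_eq_same] at h2
    simp only [hj, MonoidHom.coe_mk, OneHom.coe_mk, dif_neg hvs] at h2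
    haveI : Fact (1 < o v) := ⟨(ho v).one_lt⟩
    exact one_ne_zero (by simpa using h2 : (1 : ZMod (o v)) = 0)
  have hst : s = t := htmax s hs hsub
  subst hst
  refine ⟨rfl, fun g hgK => ?_⟩
  have hφg : φ g ∈ K := by
    rw [hK, ← hmap]
    exact ⟨g, hgK, rfl⟩
  obtain ⟨k, hk⟩ := hKrange hgK
  obtain ⟨k', hk'⟩ := hKrange hφg
  have : j k' = j k := by
    rw [← hpsiρ, ← hpsiρ, hk, hk', habψ]
  rw [← hk', ← hk, hjinj this]
end

section
/- Let 𝒢 be a graph product of cyclic groups, x, y, z distinct vertices with x ≤_∞ y and x ≤_∞ z (so the transvections R_x^y, R_x^z exist, o(x) = ∞), and let v be a vertex distinct from x, y, z with o(v) the order of v. Suppose R_x^{[y,z]} = [R_x^y, R_x^z] and the partial conjugation π^v_C do not commute in Out(𝒢), where C is a union of components of Γ \ st(v). Then (v, y, z | x) is a STIL: x lies in a component of Γ \ (lk(v) ∩ lk(y) ∩ lk(z)) containing none of v, y, z, and ⟨v, y, z⟩ is not virtually abelian. -/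
variable {V : Type*} [Fintype V]

/-- The graph `Γ \ S`: edges of `Γ` between vertices outside `S`.
Reachability in this graph expresses "lying in the same connected component of `Γ \ S`". -/
def avoidG (Γ : SimpleGraph V) (S : Set V) : SimpleGraph V where
  Adj a b := Γ.Adj a b ∧ a ∉ S ∧ b ∉ S
  symm := ⟨by rintro a b ⟨h, ha, hb⟩; exact ⟨h.symm, hb, ha⟩⟩
  loopless := ⟨by rintro a ⟨h, _, _⟩; exact Γ.irrefl h⟩

/-- `(x, y | w)` is a SIL: `x, y` are non-adjacent and `w` lies in a connected component of
`Γ \ (lk(x) ∩ lk(y))` containing neither `x` nor `y`. -/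
def IsSIL (Γ : SimpleGraph V) (x y w : V) : Prop :=
  x ≠ y ∧ ¬ Γ.Adj x y ∧ w ∉ (Γ.neighborSet x ∩ Γ.neighborSet y) ∧
  ¬ (avoidG Γ (Γ.neighborSet x ∩ Γ.neighborSet y)).Reachable w x ∧
  ¬ (avoidG Γ (Γ.neighborSet x ∩ Γ.neighborSet y)).Reachable w y

/-- A group is virtually abelian if it has a finite-index abelian subgroup. -/
def VirtuallyAbelian (G : Type*) [Group G] : Prop :=
  ∃ H : Subgroup G, H.FiniteIndex ∧ ∀ a ∈ H, ∀ b ∈ H, a * b = b * a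

/-- `(x, y, z | w)` is a STIL: the special subgroup `⟨x, y, z⟩` of the graph product is not
virtually abelian, and `w` lies in a connected component of `Γ \ (lk(x) ∩ lk(y) ∩ lk(z))`
containing none of `x`, `y`, `z`. -/
def IsSTIL (Γ : SimpleGraph V) (o : V → ℕ) (x y z w : V) : Prop :=
  ¬ VirtuallyAbelian ↥(Subgroup.closure {gen Γ o x, gen Γ o y, gen Γ o z}) ∧
  w ∉ (Γ.neighborSet x ∩ Γ.neighborSet y ∩ Γ.neighborSet z) ∧
  ¬ (avoidG Γ (Γ.neighborSet x ∩ Γ.neighborSet y ∩ Γ.neighborSet z)).Reachable w x ∧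
  ¬ (avoidG Γ (Γ.neighborSet x ∩ Γ.neighborSet y ∩ Γ.neighborSet z)).Reachable w y ∧
  ¬ (avoidG Γ (Γ.neighborSet x ∩ Γ.neighborSet y ∩ Γ.neighborSet z)).Reachable w z

open scoped commutatorElement

/-! ### Auxiliary machinery for the proof -/

set_option linter.unusedSectionVars false


namespace STILNF
open Monoid Monoid.CoprodI

set_option linter.unusedSectionVars false
variable {ι : Type*} [DecidableEq ι] {M : ι → Type*} [∀ i, Group (M i)] [∀ i, DecidableEq (M i)]

/-- `k` copies of the two-letter block `[a, b]`. -/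
def rep2 (a b : Σ i, M i) : ℕ → List (Σ i, M i)
  | 0 => []
  | k + 1 => a :: b :: rep2 a b k

lemma mem_rep2 {a b x : Σ i, M i} : ∀ {k : ℕ}, x ∈ rep2 a b k → x = a ∨ x = b := by
  intro k
  induction k with
  | zero => intro h; simp [rep2] at h
  | succ k ih =>
    intro h
    simp only [rep2, List.mem_cons] at h
    rcases h with h | h | h
    · exact Or.inl h
    · exact Or.inr h
    · exact ih h

lemma chain2 {R : (Σ i, M i) → (Σ i, M i) → Prop} {a b : Σ i, M i}
    (hab : R a b) (hba : R b a) :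
    ∀ (k : ℕ) (T : List (Σ i, M i)), T.Chain' R → (∀ c ∈ T.head?, R b c) →
      (rep2 a b k ++ T).Chain' R ∧
        ((rep2 a b k ++ T).head? = T.head? ∨ (rep2 a b k ++ T).head? = some a) := by
  intro k
  induction k with
  | zero => intro T hT hhead; exact ⟨by simpa [rep2] using hT, Or.inl (by simp [rep2])⟩
  | succ k ih =>
    intro T hT hhead
    obtain ⟨hL, hheadL⟩ := ih T hT hhead
    have hbL : ∀ c ∈ (rep2 a b k ++ T).head?, R b c := by
      intro c hc
      rcases hheadL with h | h
      · exact hhead c (h ▸ hc)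
      · rw [h] at hc; simp only [Option.mem_def, Option.some.injEq] at hc; exact hc ▸ hba
    constructor
    · show ((a :: b :: (rep2 a b k ++ T)).IsChain R)
      rw [List.isChain_cons]
      refine ⟨by simp [hab], ?_⟩
      rw [List.isChain_cons]
      exact ⟨hbL, hL⟩
    · right; rfl

lemma prod_rep2 {G : Type*} [Monoid G] (f : (Σ i, M i) → G) (a b : Σ i, M i) :
    ∀ k : ℕ, ((rep2 a b k).map f).prod = (f a * f b) ^ k := by
  intro k
  induction k with
  | zero => simp [rep2]
  | succ k ih => simp [rep2, ih, pow_succ', mul_assoc]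

theorem nf_ne (p q r u : Σ i, M i)
    (hp : p.2 ≠ 1) (hq : q.2 ≠ 1) (hr : r.2 ≠ 1) (hu : u.2 ≠ 1)
    (hpq : p.1 ≠ q.1) (hru : r.1 ≠ u.1) (hqr : q.1 ≠ r.1) (hup : u.1 ≠ p.1)
    (hne : p ≠ r ∨ q ≠ u) {m n : ℕ} (hm : m ≠ 0) (hn : n ≠ 0) :
    (of p.2 * of q.2) ^ m * (of r.2 * of u.2) ^ n ≠
      (of r.2 * of u.2) ^ n * (of p.2 * of q.2) ^ m := by
  obtain ⟨m, rfl⟩ := Nat.exists_eq_succ_of_ne_zero hm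
  obtain ⟨n, rfl⟩ := Nat.exists_eq_succ_of_ne_zero hn
  intro heq
  -- the two reduced words
  have hne1 : ∀ l ∈ rep2 p q (m+1) ++ rep2 r u (n+1), l.2 ≠ (1 : M l.1) := by
    intro l hl
    rcases List.mem_append.mp hl with h | h
    · rcases mem_rep2 h with rfl | rfl <;> assumption
    · rcases mem_rep2 h with rfl | rfl <;> assumption
  have hne2 : ∀ l ∈ rep2 r u (n+1) ++ rep2 p q (m+1), l.2 ≠ (1 : M l.1) := by
    intro l hl
    rcases List.mem_append.mp hl with h | h
    · rcases mem_rep2 h with rfl | rfl <;> assumption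
    · rcases mem_rep2 h with rfl | rfl <;> assumption
  have hchainT : (rep2 r u (n+1)).Chain' (fun a b : Σ i, M i => a.1 ≠ b.1) := by
    have := (chain2 (R := fun a b : Σ i, M i => a.1 ≠ b.1) hru (Ne.symm hru) (n+1) []
      List.isChain_nil (by simp)).1
    simpa using this
  have hheadT : (rep2 r u (n+1)).head? = some r := rfl
  have hchain1 : (rep2 p q (m+1) ++ rep2 r u (n+1)).Chain'
      (fun a b : Σ i, M i => a.1 ≠ b.1) := by
    refine (chain2 (R := fun a b : Σ i, M i => a.1 ≠ b.1) (a := p) (b := q) hpq (Ne.symm hpq) (m+1) _ hchainT ?_).1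
    intro c hc
    rw [hheadT] at hc
    simp only [Option.mem_def, Option.some.injEq] at hc
    exact hc ▸ hqr
  have hchainS : (rep2 p q (m+1)).Chain' (fun a b : Σ i, M i => a.1 ≠ b.1) := by
    have := (chain2 (R := fun a b : Σ i, M i => a.1 ≠ b.1) hpq (Ne.symm hpq) (m+1) []
      List.isChain_nil (by simp)).1
    simpa using this
  have hheadS : (rep2 p q (m+1)).head? = some p := rfl
  have hchain2 : (rep2 r u (n+1) ++ rep2 p q (m+1)).Chain'
      (fun a b : Σ i, M i => a.1 ≠ b.1) := by
    refine (chain2 (R := fun a b : Σ i, M i => a.1 ≠ b.1) (a := r) (b := u) hru (Ne.symm hru) (n+1) _ hchainS ?_).1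
    intro c hc
    rw [hheadS] at hc
    simp only [Option.mem_def, Option.some.injEq] at hc
    exact hc ▸ hup
  let W1 : Word M := ⟨rep2 p q (m+1) ++ rep2 r u (n+1), hne1, hchain1⟩
  let W2 : Word M := ⟨rep2 r u (n+1) ++ rep2 p q (m+1), hne2, hchain2⟩
  have hprod1 : W1.prod = (of p.2 * of q.2) ^ (m+1) * (of r.2 * of u.2) ^ (n+1) := by
    show (((rep2 p q (m+1) ++ rep2 r u (n+1)).map fun l => of l.2).prod) = _
    rw [List.map_append, List.prod_append, prod_rep2, prod_rep2]
  have hprod2 : W2.prod = (of r.2 * of u.2) ^ (n+1) * (of p.2 * of q.2) ^ (m+1) := by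
    show (((rep2 r u (n+1) ++ rep2 p q (m+1)).map fun l => of l.2).prod) = _
    rw [List.map_append, List.prod_append, prod_rep2, prod_rep2]
  have hinj : Function.Injective (Word.prod : Word M → CoprodI M) := by
    have : (Word.prod : Word M → CoprodI M) = (Word.equiv (M := M)).symm := rfl
    rw [this]
    exact (Word.equiv (M := M)).symm.injective
  have hW : W1 = W2 := hinj (by rw [hprod1, hprod2, heq])
  have hlist : rep2 p q (m+1) ++ rep2 r u (n+1) = rep2 r u (n+1) ++ rep2 p q (m+1) :=
    congrArg Word.toList hW
  have : p = r ∧ q = u := by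
    have h2 : p :: q :: (rep2 p q m ++ rep2 r u (n+1)) =
        r :: u :: (rep2 r u n ++ rep2 p q (m+1)) := hlist
    exact ⟨(List.cons.injEq _ _ _ _).mp h2 |>.1,
      ((List.cons.injEq _ _ _ _).mp ((List.cons.injEq _ _ _ _).mp h2 |>.2)).1⟩
  rcases hne with h | h
  · exact h this.1
  · exact h this.2

end STILNF

section STILAuxSection

open Monoid

variable {Γ : SimpleGraph V} {o : V → ℕ}
variable {x y z v : V} {α β π : MulAut (GP Γ o)} {C : Set V}

namespace STILAux

lemma gp_rel_one {r : FreeGroup V} (hr : r ∈ gpRels Γ o) :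
    PresentedGroup.mk (gpRels Γ o) r = 1 :=
  (QuotientGroup.eq_one_iff _).mpr (Subgroup.subset_normalClosure hr)

lemma gen_comm {u w : V} (h : Γ.Adj u w) :
    gen Γ o u * gen Γ o w = gen Γ o w * gen Γ o u := by
  have hr : (FreeGroup.of u * FreeGroup.of w * (FreeGroup.of u)⁻¹ * (FreeGroup.of w)⁻¹)
      ∈ gpRels Γ o := Or.inl ⟨u, w, h, rfl⟩
  have h1 := gp_rel_one hr
  rw [map_mul, map_mul, map_inv, map_inv] at h1
  have h2 : gen Γ o u * gen Γ o w * (gen Γ o u)⁻¹ * (gen Γ o w)⁻¹ = 1 := h1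
  calc gen Γ o u * gen Γ o w
      = (gen Γ o u * gen Γ o w * (gen Γ o u)⁻¹ * (gen Γ o w)⁻¹) * (gen Γ o w * gen Γ o u) := by
        group
    _ = gen Γ o w * gen Γ o u := by rw [h2]; group

lemma gen_pow_eq_one {w : V} (h : o w ≠ 0) : gen Γ o w ^ (o w) = 1 := by
  have hr : (FreeGroup.of w ^ (o w)) ∈ gpRels Γ o := Or.inr ⟨w, h, rfl⟩
  have h1 := gp_rel_one hr
  rw [map_pow] at h1
  exact h1

lemma gen_eq_one {w : V} (h : o w = 1) : gen Γ o w = 1 := by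
  have := gen_pow_eq_one (Γ := Γ) (o := o) (w := w) (by rw [h]; exact one_ne_zero)
  rwa [h, pow_one] at this

lemma gp_aut_ext {φ ψ : MulAut (GP Γ o)} (h : ∀ w, φ (gen Γ o w) = ψ (gen Γ o w)) : φ = ψ :=
  MulEquiv.toMonoidHom_injective (PresentedGroup.ext h)

/-- Existence of a homomorphism from the graph product determined by images of
three distinguished vertices (all other generators going to `1`). -/
lemma exists_gp_hom {Q : Type*} [Group Q] (v y z : V)
    (hvy : v ≠ y) (hvz : v ≠ z) (hyz : y ≠ z) (Av Ay Az : Q)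
    (hcvy : Γ.Adj v y → Commute Av Ay)
    (hcvz : Γ.Adj v z → Commute Av Az)
    (hcyz : Γ.Adj y z → Commute Ay Az)
    (hov : Av ^ (o v) = 1) (hoy : Ay ^ (o y) = 1) (hoz : Az ^ (o z) = 1) :
    ∃ F : GP Γ o →* Q, F (gen Γ o v) = Av ∧ F (gen Γ o y) = Ay ∧ F (gen Γ o z) = Az := by
  classical
  set f₀ : V → Q := fun w => if w = v then Av else if w = y then Ay else if w = z then Az else 1
    with hf₀
  have hcomm : ∀ a b : V, Γ.Adj a b → Commute (f₀ a) (f₀ b) := by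
    intro a b hadj
    simp only [hf₀]
    split_ifs with h1 h2 h3 h4 h5 h6 h7 h8 h9 h10 h11 h12 h13 h14 h15 <;>
      subst_vars <;>
      first
        | exact Commute.one_left _
        | exact Commute.one_right _
        | exact Commute.refl _
        | exact (Γ.irrefl hadj).elim
        | exact hcvy hadj
        | exact (hcvy (Γ.adj_symm hadj)).symm
        | exact hcvz hadj
        | exact (hcvz (Γ.adj_symm hadj)).symm
        | exact hcyz hadj
        | exact (hcyz (Γ.adj_symm hadj)).symm
  have hrel : ∀ r ∈ gpRels Γ o, FreeGroup.lift f₀ r = 1 := by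
    rintro r (⟨a, b, hadj, rfl⟩ | ⟨a, ha, rfl⟩)
    · simp only [map_mul, map_inv, FreeGroup.lift_apply_of]
      have := (hcomm a b hadj).eq
      rw [this]
      group
    · rw [map_pow, FreeGroup.lift_apply_of]
      simp only [hf₀]
      split_ifs <;> subst_vars <;> simp [hov, hoy, hoz]
  refine ⟨PresentedGroup.toGroup hrel, ?_, ?_, ?_⟩
  · rw [show gen Γ o v = PresentedGroup.of v from rfl, PresentedGroup.toGroup.of]
    simp [hf₀]
  · rw [show gen Γ o y = PresentedGroup.of y from rfl, PresentedGroup.toGroup.of]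
    simp [hf₀, hvy.symm]
  · rw [show gen Γ o z = PresentedGroup.of z from rfl, PresentedGroup.toGroup.of]
    simp [hf₀, hvz.symm, hyz.symm]

lemma exists_comm_pow {G : Type*} [Group G] (h : VirtuallyAbelian G) (a b : G) :
    ∃ m n : ℕ, m ≠ 0 ∧ n ≠ 0 ∧ a ^ m * b ^ n = b ^ n * a ^ m := by
  obtain ⟨H, hfi, hab⟩ := h
  obtain ⟨m, hm, -, ham⟩ := Subgroup.exists_pow_mem_of_index_ne_zero hfi.index_ne_zero a
  obtain ⟨n, hn, -, hbn⟩ := Subgroup.exists_pow_mem_of_index_ne_zero hfi.index_ne_zero b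
  exact ⟨m, n, hm.ne', hn.ne', hab _ ham _ hbn⟩

lemma zmod_one_ne_zero {k : ℕ} (h : k ≠ 1) : (1 : ZMod k) ≠ 0 := by
  match k with
  | 0 => exact one_ne_zero
  | Nat.succ k =>
    intro h0
    have : ((1 : ℕ) : ZMod (k+1)) = 0 := by simpa using h0
    exact h (Nat.dvd_one.mp ((ZMod.natCast_eq_zero_iff 1 (k+1)).mp this))



lemma ofAdd_pair_ne_one {k l : ℕ} {x : ZMod k × ZMod l} (hx : x ≠ 0) :
    Multiplicative.ofAdd x ≠ 1 := by
  intro h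
  rw [← ofAdd_zero] at h
  exact hx (Multiplicative.ofAdd.injective h)

lemma not_va_triple (w₀ w₁ w₂ : V)
    (h01 : w₀ ≠ w₁) (h02 : w₀ ≠ w₂) (h12 : w₁ ≠ w₂)
    (ha02 : ¬ Γ.Adj w₀ w₂) (ha12 : ¬ Γ.Adj w₁ w₂)
    (ho0 : o w₀ ≠ 1) (ho1 : o w₁ ≠ 1) (ho2 : o w₂ ≠ 1)
    (H : Subgroup (GP Γ o)) (hm0 : gen Γ o w₀ ∈ H) (hm1 : gen Γ o w₁ ∈ H)
    (hm2 : gen Γ o w₂ ∈ H) :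
    ¬ VirtuallyAbelian (↥H) := by
  intro hVA
  classical
  let A : Fin 2 → ℕ := ![o w₀, o w₂]
  let B : Fin 2 → ℕ := ![o w₁, 1]
  let M : Fin 2 → Type _ := fun i => Multiplicative (ZMod (A i) × ZMod (B i))
  -- the three images
  let Av : CoprodI M := CoprodI.of (M := M) (i := 0)
    (Multiplicative.ofAdd ((1 : ZMod (A 0)), (0 : ZMod (B 0))))
  let Ay : CoprodI M := CoprodI.of (M := M) (i := 0)
    (Multiplicative.ofAdd ((0 : ZMod (A 0)), (1 : ZMod (B 0))))
  let Az : CoprodI M := CoprodI.of (M := M) (i := 1)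
    (Multiplicative.ofAdd ((1 : ZMod (A 1)), (0 : ZMod (B 1))))
  have hsame : ∀ (i : Fin 2) (s t : M i), Commute (CoprodI.of s) (CoprodI.of t) := by
    intro i s t
    have : s * t = t * s := mul_comm s t
    unfold Commute SemiconjBy
    rw [← map_mul, ← map_mul, this]
  have hpow1 : ∀ k l : ℕ, (Multiplicative.ofAdd ((1 : ZMod k), (0 : ZMod l))) ^ k = 1 := by
    intro k l
    have hz : k • ((1 : ZMod k), (0 : ZMod l)) = 0 := by
      ext
      · simp [nsmul_eq_mul, ZMod.natCast_self]
      · simp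
    rw [← ofAdd_nsmul, hz, ofAdd_zero]
  have hpow2 : ∀ k l : ℕ, (Multiplicative.ofAdd ((0 : ZMod k), (1 : ZMod l))) ^ l = 1 := by
    intro k l
    have hz : l • ((0 : ZMod k), (1 : ZMod l)) = 0 := by
      ext
      · simp
      · simp [nsmul_eq_mul, ZMod.natCast_self]
    rw [← ofAdd_nsmul, hz, ofAdd_zero]
  have hAv : Av ^ (o w₀) = 1 := by
    have h : (Multiplicative.ofAdd ((1 : ZMod (A 0)), (0 : ZMod (B 0)))) ^ (o w₀) = 1 :=
      hpow1 (o w₀) (B 0)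
    calc Av ^ (o w₀) = CoprodI.of (M := M) (i := 0)
          ((Multiplicative.ofAdd ((1 : ZMod (A 0)), (0 : ZMod (B 0)))) ^ (o w₀)) :=
        (map_pow _ _ _).symm
      _ = 1 := by rw [h]; exact map_one _
  have hAy : Ay ^ (o w₁) = 1 := by
    have h : (Multiplicative.ofAdd ((0 : ZMod (A 0)), (1 : ZMod (B 0)))) ^ (o w₁) = 1 :=
      hpow2 (A 0) (o w₁)
    calc Ay ^ (o w₁) = CoprodI.of (M := M) (i := 0)
          ((Multiplicative.ofAdd ((0 : ZMod (A 0)), (1 : ZMod (B 0)))) ^ (o w₁)) :=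
        (map_pow _ _ _).symm
      _ = 1 := by rw [h]; exact map_one _
  have hAz : Az ^ (o w₂) = 1 := by
    have h : (Multiplicative.ofAdd ((1 : ZMod (A 1)), (0 : ZMod (B 1)))) ^ (o w₂) = 1 :=
      hpow1 (o w₂) (B 1)
    calc Az ^ (o w₂) = CoprodI.of (M := M) (i := 1)
          ((Multiplicative.ofAdd ((1 : ZMod (A 1)), (0 : ZMod (B 1)))) ^ (o w₂)) :=
        (map_pow _ _ _).symm
      _ = 1 := by rw [h]; exact map_one _
  obtain ⟨F, hFv, hFy, hFz⟩ := exists_gp_hom (Γ := Γ) (o := o) w₀ w₁ w₂ h01 h02 h12 Av Ay Az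
    (fun _ => hsame 0 _ _) (fun h => absurd h ha02) (fun h => absurd h ha12) hAv hAy hAz
  -- the two elements of H with no commuting powers
  set a : GP Γ o := gen Γ o w₁ * gen Γ o w₂ with ha
  set b : GP Γ o := gen Γ o w₀ * gen Γ o w₂ with hb
  obtain ⟨m, n, hm, hn, hcomm⟩ := exists_comm_pow hVA
    ⟨a, H.mul_mem hm1 hm2⟩ ⟨b, H.mul_mem hm0 hm2⟩
  have hGP : a ^ m * b ^ n = b ^ n * a ^ m := by
    have := congrArg (Subtype.val) hcomm
    push_cast at this
    exact_mod_cast this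
  have hQ : (Ay * Az) ^ m * (Av * Az) ^ n = (Av * Az) ^ n * (Ay * Az) ^ m := by
    have := congrArg F hGP
    simpa only [map_mul, map_pow, ha, hb, hFv, hFy, hFz] using this
  -- normal form contradiction
  refine STILNF.nf_ne (M := M)
    (⟨0, Multiplicative.ofAdd ((0 : ZMod (A 0)), (1 : ZMod (B 0)))⟩)
    (⟨1, Multiplicative.ofAdd ((1 : ZMod (A 1)), (0 : ZMod (B 1)))⟩)
    (⟨0, Multiplicative.ofAdd ((1 : ZMod (A 0)), (0 : ZMod (B 0)))⟩)
    (⟨1, Multiplicative.ofAdd ((1 : ZMod (A 1)), (0 : ZMod (B 1)))⟩)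
    ?_ ?_ ?_ ?_ ?_ ?_ ?_ ?_ ?_ hm hn hQ
  · exact ofAdd_pair_ne_one (by
      intro h
      exact zmod_one_ne_zero (k := B 0) ho1 (congrArg Prod.snd h))
  · exact ofAdd_pair_ne_one (by
      intro h
      exact zmod_one_ne_zero (k := A 1) ho2 (congrArg Prod.fst h))
  · exact ofAdd_pair_ne_one (by
      intro h
      exact zmod_one_ne_zero (k := A 0) ho0 (congrArg Prod.fst h))
  · exact ofAdd_pair_ne_one (by
      intro h
      exact zmod_one_ne_zero (k := A 1) ho2 (congrArg Prod.fst h))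
  · exact (by decide : (0 : Fin 2) ≠ 1)
  · exact (by decide : (0 : Fin 2) ≠ 1)
  · exact (by decide : (1 : Fin 2) ≠ 0)
  · exact (by decide : (1 : Fin 2) ≠ 0)
  · left
    intro h
    have h2 := eq_of_heq (Sigma.mk.inj_iff.mp h).2
    have h3 := Multiplicative.ofAdd.injective h2
    exact zmod_one_ne_zero (k := B 0) ho1 (congrArg Prod.snd h3)



lemma transv_apply (hα : IsTransv Γ o α x y 1) :
    α (gen Γ o x) = gen Γ o x * gen Γ o y := by
  have := hα.1; rwa [zpow_one] at this

lemma transv_inv_apply_ne (hα : IsTransv Γ o α x y 1) {w : V} (hw : w ≠ x) :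
    α⁻¹ (gen Γ o w) = gen Γ o w := by
  apply α.injective
  rw [MulAut.apply_inv_self, hα.2 w hw]

lemma transv_inv_apply (hα : IsTransv Γ o α x y 1) (hxy : x ≠ y) :
    α⁻¹ (gen Γ o x) = gen Γ o x * (gen Γ o y)⁻¹ := by
  apply α.injective
  rw [MulAut.apply_inv_self, map_mul, map_inv, transv_apply hα, hα.2 y (Ne.symm hxy)]
  group

lemma comm_apply_ne (hα : IsTransv Γ o α x y 1) (hβ : IsTransv Γ o β x z 1)
    {w : V} (hw : w ≠ x) : ⁅α, β⁆ (gen Γ o w) = gen Γ o w := by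
  rw [commutatorElement_def, MulAut.mul_apply, MulAut.mul_apply, MulAut.mul_apply,
    transv_inv_apply_ne hβ hw, transv_inv_apply_ne hα hw, hβ.2 w hw, hα.2 w hw]

lemma comm_apply_x (hα : IsTransv Γ o α x y 1) (hβ : IsTransv Γ o β x z 1)
    (hxy : x ≠ y) (hxz : x ≠ z) :
    ⁅α, β⁆ (gen Γ o x) =
      gen Γ o x * gen Γ o y * gen Γ o z * (gen Γ o y)⁻¹ * (gen Γ o z)⁻¹ := by
  rw [commutatorElement_def]
  simp only [MulAut.mul_apply, map_mul, map_inv, transv_inv_apply hβ hxz,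
    transv_inv_apply_ne hβ (Ne.symm hxy), transv_inv_apply_ne hβ (Ne.symm hxz),
    transv_inv_apply hα hxy, transv_inv_apply_ne hα (Ne.symm hxy),
    transv_inv_apply_ne hα (Ne.symm hxz), transv_apply hβ, hβ.2 y (Ne.symm hxy),
    hβ.2 z (Ne.symm hxz), transv_apply hα, hα.2 y (Ne.symm hxy), hα.2 z (Ne.symm hxz)]

lemma alpha_eq_one (hα : IsTransv Γ o α x y 1) (h1 : gen Γ o y = 1) : α = 1 := by
  apply gp_aut_ext
  intro w
  rw [MulAut.one_apply]
  by_cases hw : w = x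
  · subst hw; rw [transv_apply hα, h1, mul_one]
  · exact hα.2 w hw

lemma pi_eq_one (hπ : IsPC Γ o π v C) (h1 : gen Γ o v = 1) : π = 1 := by
  apply gp_aut_ext
  intro w
  rw [MulAut.one_apply]
  by_cases hw : w ∈ C
  · rw [hπ.1 w hw, h1]; group
  · exact hπ.2 w hw

/-- If `y` and `z` are adjacent, the two transvections commute. -/
lemma key_yz (hα : IsTransv Γ o α x y 1) (hβ : IsTransv Γ o β x z 1)
    (hxy : x ≠ y) (hxz : x ≠ z) (hadj : Γ.Adj y z) : ⁅α, β⁆ = 1 := by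
  rw [commutatorElement_eq_one_iff_mul_comm]
  apply gp_aut_ext
  intro w
  rw [MulAut.mul_apply, MulAut.mul_apply]
  by_cases hw : w = x
  · subst hw
    simp only [map_mul, transv_apply hβ, hβ.2 y (Ne.symm hxy), transv_apply hα,
      hα.2 z (Ne.symm hxz)]
    rw [mul_assoc, mul_assoc, gen_comm hadj]
  · simp only [hβ.2 w hw, hα.2 w hw]

/-- Case `x ∉ C`, `y ∉ C`, `z ∉ C`: the commutator transvection commutes with the
partial conjugation. -/
lemma key_out (hα : IsTransv Γ o α x y 1) (hβ : IsTransv Γ o β x z 1)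
    (hπ : IsPC Γ o π v C) (hxy : x ≠ y) (hxz : x ≠ z) (hxv : x ≠ v)
    (hxC : x ∉ C) (hyC : y ∉ C) (hzC : z ∉ C) : ⁅⁅α, β⁆, π⁆ = 1 := by
  rw [commutatorElement_eq_one_iff_mul_comm]
  apply gp_aut_ext
  intro w
  rw [MulAut.mul_apply, MulAut.mul_apply]
  by_cases hw : w = x
  · subst hw
    rw [hπ.2 _ hxC, comm_apply_x hα hβ hxy hxz]
    simp only [map_mul, map_inv, hπ.2 _ hxC, hπ.2 y hyC, hπ.2 z hzC]
  · by_cases hwC : w ∈ C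
    · rw [hπ.1 w hwC, comm_apply_ne hα hβ hw, hπ.1 w hwC]
      simp only [map_mul, map_inv, comm_apply_ne hα hβ (Ne.symm hxv),
        comm_apply_ne hα hβ hw]
    · rw [hπ.2 w hwC, comm_apply_ne hα hβ hw, hπ.2 w hwC]

/-- Case `x ∈ C` and `π` conjugates both `y` and `z` by `v` (as elements). -/
lemma key_in (hα : IsTransv Γ o α x y 1) (hβ : IsTransv Γ o β x z 1)
    (hπ : IsPC Γ o π v C) (hxy : x ≠ y) (hxz : x ≠ z) (hxv : x ≠ v)
    (hxC : x ∈ C)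
    (hy : π (gen Γ o y) = gen Γ o v * gen Γ o y * (gen Γ o v)⁻¹)
    (hz : π (gen Γ o z) = gen Γ o v * gen Γ o z * (gen Γ o v)⁻¹) : ⁅⁅α, β⁆, π⁆ = 1 := by
  rw [commutatorElement_eq_one_iff_mul_comm]
  apply gp_aut_ext
  intro w
  rw [MulAut.mul_apply, MulAut.mul_apply]
  by_cases hw : w = x
  · subst hw
    rw [hπ.1 _ hxC, comm_apply_x hα hβ hxy hxz]
    simp only [map_mul, map_inv, comm_apply_ne hα hβ (Ne.symm hxv),
      comm_apply_x hα hβ hxy hxz, hπ.1 _ hxC, hy, hz]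
    group
  · by_cases hwC : w ∈ C
    · rw [hπ.1 w hwC, comm_apply_ne hα hβ hw, hπ.1 w hwC]
      simp only [map_mul, map_inv, comm_apply_ne hα hβ (Ne.symm hxv),
        comm_apply_ne hα hβ hw]
    · rw [hπ.2 w hwC, comm_apply_ne hα hβ hw, hπ.2 w hwC]


end STILAux

end STILAuxSection

/-- If `x, y, z, v` are distinct, `x ≤_∞ y`, `x ≤_∞ z`, and the commutator transvection
`R_x^{[y,z]} = [R_x^y, R_x^z]` does not commute with the partial conjugation `π^v_C` in
`Out(𝒢)`, then `(v, y, z | x)` is a STIL. -/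
theorem comm_transvection_and_pc_not_commute_gives_STIL (Γ : SimpleGraph V) (o : V → ℕ)
    (x y z v : V)
    (hxy : x ≠ y) (hxz : x ≠ z) (hxv : x ≠ v) (hyz : y ≠ z) (hyv : y ≠ v) (hzv : z ≠ v)
    (hx : o x = 0)
    (hdy : Γ.neighborSet x ⊆ stS Γ y) (hdz : Γ.neighborSet x ⊆ stS Γ z)
    (α β π : MulAut (GP Γ o))
    (hα : IsTransv Γ o α x y 1) (hβ : IsTransv Γ o β x z 1)
    (C : Set V) (hUC : IsUnionComponents Γ v C) (hπ : IsPC Γ o π v C)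
    (hnc : ⁅⁅α, β⁆, π⁆ ∉ (MulAut.conj : GP Γ o →* MulAut (GP Γ o)).range) :
    IsSTIL Γ o v y z x := by
  classical
  obtain ⟨hCst, hCclose⟩ := hUC
  have hne1 : ⁅⁅α, β⁆, π⁆ ≠ 1 := by
    intro h
    exact hnc (h ▸ ⟨1, map_one _⟩)
  have hCdisj : ∀ w, w ∈ C → w ∈ stS Γ v → False := by
    intro w h1 h2
    have hmem : w ∈ C ∩ stS Γ v := ⟨h1, h2⟩
    rw [hCst] at hmem
    exact hmem
  -- y and z are non-adjacent
  have D1 : ¬ Γ.Adj y z := fun hadj =>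
    hne1 (by rw [STILAux.key_yz hα hβ hxy hxz hadj, commutatorElement_one_left])
  -- orders are not 1
  have hoy : o y ≠ 1 := fun h =>
    hne1 (by rw [STILAux.alpha_eq_one hα (STILAux.gen_eq_one h),
      commutatorElement_one_left, commutatorElement_one_left])
  have hoz : o z ≠ 1 := fun h =>
    hne1 (by rw [STILAux.alpha_eq_one hβ (STILAux.gen_eq_one h),
      commutatorElement_one_right, commutatorElement_one_left])
  have hov : o v ≠ 1 := fun h =>
    hne1 (by rw [STILAux.pi_eq_one hπ (STILAux.gen_eq_one h), commutatorElement_one_right])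
  -- at least one of x, y, z lies in C
  have D2 : x ∈ C ∨ y ∈ C ∨ z ∈ C := by
    by_contra hc
    push_neg at hc
    exact hne1 (STILAux.key_out hα hβ hπ hxy hxz hxv hc.1 hc.2.1 hc.2.2)
  -- not all of the "good" configuration with x ∈ C
  have D3 : ¬ (x ∈ C ∧ (y ∈ C ∨ Γ.Adj v y) ∧ (z ∈ C ∨ Γ.Adj v z)) := by
    rintro ⟨h1, h2, h3⟩
    have hy' : π (gen Γ o y) = gen Γ o v * gen Γ o y * (gen Γ o v)⁻¹ := by
      rcases h2 with h2 | h2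
      · exact hπ.1 y h2
      · have hyC : y ∉ C := fun hy =>
          hCdisj y hy (Set.mem_insert_of_mem _ ((Γ.mem_neighborSet v y).mpr h2))
        rw [hπ.2 y hyC, STILAux.gen_comm h2]
        group
    have hz' : π (gen Γ o z) = gen Γ o v * gen Γ o z * (gen Γ o v)⁻¹ := by
      rcases h3 with h3 | h3
      · exact hπ.1 z h3
      · have hzC : z ∉ C := fun hz =>
          hCdisj z hz (Set.mem_insert_of_mem _ ((Γ.mem_neighborSet v z).mpr h3))
        rw [hπ.2 z hzC, STILAux.gen_comm h3]
        group
    exact hne1 (STILAux.key_in hα hβ hπ hxy hxz hxv h1 hy' hz')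
  -- each neighbour of x is adjacent to y and z
  have hlk : ∀ a, Γ.Adj x a → (a = y ∨ Γ.Adj y a) ∧ (a = z ∨ Γ.Adj z a) := by
    intro a ha
    have h1 := hdy ((Γ.mem_neighborSet x a).mpr ha)
    have h2 := hdz ((Γ.mem_neighborSet x a).mpr ha)
    constructor
    · rcases h1 with h | h
      · exact Or.inl h
      · exact Or.inr ((Γ.mem_neighborSet y a).mp h)
    · rcases h2 with h | h
      · exact Or.inl h
      · exact Or.inr ((Γ.mem_neighborSet z a).mp h)
  -- v is not adjacent to x
  have F1 : ¬ Γ.Adj v x := by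
    intro h
    have hxlk := hlk v h.symm
    have hvy : Γ.Adj v y := by
      rcases hxlk.1 with h' | h'
      · exact absurd h'.symm hyv
      · exact h'.symm
    have hvz : Γ.Adj v z := by
      rcases hxlk.2 with h' | h'
      · exact absurd h'.symm hzv
      · exact h'.symm
    have hyC : y ∉ C := fun hy =>
      hCdisj y hy (Set.mem_insert_of_mem _ ((Γ.mem_neighborSet v y).mpr hvy))
    have hzC : z ∉ C := fun hz =>
      hCdisj z hz (Set.mem_insert_of_mem _ ((Γ.mem_neighborSet v z).mpr hvz))
    have hxC : x ∉ C := fun hxc =>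
      hCdisj x hxc (Set.mem_insert_of_mem _ ((Γ.mem_neighborSet v x).mpr h))
    rcases D2 with h' | h' | h' <;> contradiction
  have hxnv : x ∉ stS Γ v := by
    rintro (rfl | h')
    · exact hxv rfl
    · exact F1 ((Γ.mem_neighborSet v x).mp h')
  -- the master fact: every neighbour of x lies in lk(v) ∩ lk(y) ∩ lk(z)
  have F2 : ∀ a, Γ.Adj x a →
      a ∉ (Γ.neighborSet v ∩ Γ.neighborSet y ∩ Γ.neighborSet z) → False := by
    intro a ha haS
    have hlka := hlk a ha
    have hay : Γ.Adj y a := by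
      rcases hlka.1 with rfl | h
      · rcases hlka.2 with h' | h'
        · exact absurd h' hyz
        · exact absurd h'.symm D1
      · exact h
    have haz : Γ.Adj z a := by
      rcases hlka.2 with rfl | h
      · exact absurd hay D1
      · exact h
    have hav : ¬ Γ.Adj v a := by
      intro h
      exact haS ⟨⟨(Γ.mem_neighborSet v a).mpr h, (Γ.mem_neighborSet y a).mpr hay⟩,
        (Γ.mem_neighborSet z a).mpr haz⟩
    have hanv : a ∉ stS Γ v := by
      rintro (rfl | h')
      · exact F1 ha.symm
      · exact hav ((Γ.mem_neighborSet v a).mp h')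
    by_cases hxC : x ∈ C
    · have haC : a ∈ C := hCclose x a ha hxC hanv
      have hy2 : y ∈ C ∨ Γ.Adj v y := by
        by_cases hyst : y ∈ stS Γ v
        · rcases hyst with rfl | h'
          · exact absurd rfl hyv
          · exact Or.inr ((Γ.mem_neighborSet v y).mp h')
        · exact Or.inl (hCclose a y hay.symm haC hyst)
      have hz2 : z ∈ C ∨ Γ.Adj v z := by
        by_cases hzst : z ∈ stS Γ v
        · rcases hzst with rfl | h'
          · exact absurd rfl hzv
          · exact Or.inr ((Γ.mem_neighborSet v z).mp h')
        · exact Or.inl (hCclose a z haz.symm haC hzst)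
      exact D3 ⟨hxC, hy2, hz2⟩
    · have haC : a ∉ C := fun h => hxC (hCclose a x ha.symm h hxnv)
      have hyC : y ∉ C := fun h => haC (hCclose y a hay h hanv)
      have hzC : z ∉ C := fun h => haC (hCclose z a haz h hanv)
      rcases D2 with h' | h' | h' <;> contradiction
  -- assemble the STIL
  refine ⟨?_, ?_, ?_, ?_, ?_⟩
  · -- not virtually abelian
    have hmv : gen Γ o v ∈ Subgroup.closure {gen Γ o v, gen Γ o y, gen Γ o z} :=
      Subgroup.subset_closure (by simp)
    have hmy : gen Γ o y ∈ Subgroup.closure {gen Γ o v, gen Γ o y, gen Γ o z} :=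
      Subgroup.subset_closure (by simp)
    have hmz : gen Γ o z ∈ Subgroup.closure {gen Γ o v, gen Γ o y, gen Γ o z} :=
      Subgroup.subset_closure (by simp)
    by_cases hvy : Γ.Adj v y
    · have hvz : ¬ Γ.Adj v z := by
        intro hvz
        have hyC : y ∉ C := fun hy =>
          hCdisj y hy (Set.mem_insert_of_mem _ ((Γ.mem_neighborSet v y).mpr hvy))
        have hzC : z ∉ C := fun hz =>
          hCdisj z hz (Set.mem_insert_of_mem _ ((Γ.mem_neighborSet v z).mpr hvz))
        have hxC : x ∈ C := by
          rcases D2 with h' | h' | h'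
          · exact h'
          · contradiction
          · contradiction
        exact D3 ⟨hxC, Or.inr hvy, Or.inr hvz⟩
      exact STILAux.not_va_triple v y z hyv.symm hzv.symm hyz hvz D1 hov hoy hoz _
        hmv hmy hmz
    · exact STILAux.not_va_triple v z y hzv.symm hyv.symm hyz.symm hvy
        (fun h => D1 h.symm) hov hoz hoy _ hmv hmz hmy
  · intro h
    exact F1 ((Γ.mem_neighborSet v x).mp h.1.1)
  · intro h
    obtain ⟨p⟩ := h
    cases p with
    | nil => exact hxv rfl
    | cons hadj _ => exact F2 _ hadj.1 hadj.2.2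
  · intro h
    obtain ⟨p⟩ := h
    cases p with
    | nil => exact hxy rfl
    | cons hadj _ => exact F2 _ hadj.1 hadj.2.2
  · intro h
    obtain ⟨p⟩ := h
    cases p with
    | nil => exact hxz rfl
    | cons hadj _ => exact F2 _ hadj.1 hadj.2.2
end

section
/- Let 𝒢 be a graph product of cyclic groups and let α = π^a_C and β = π^b_D be partial conjugations (a ≠ b or C ≠ D). If a = b and C ∩ D = ∅, or if ({a} ∪ C) ∩ ({b} ∪ D) = ∅, or if a and b commute (ab = ba in 𝒢) and C = D, then α and β commute in Aut(𝒢). -/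
variable {V : Type*} [Fintype V]

lemma gp_hom_ext {Γ : SimpleGraph V} {o : V → ℕ} {H : Type*} [Group H]
    (f g : GP Γ o →* H) (h : ∀ v, f (gen Γ o v) = g (gen Γ o v)) : f = g := by
  apply QuotientGroup.monoidHom_ext
  apply FreeGroup.ext_hom
  intro v
  exact h v

lemma gen_comm_s15 {Γ : SimpleGraph V} {o : V → ℕ} {a b : V} (h : Γ.Adj a b) :
    gen Γ o a * gen Γ o b = gen Γ o b * gen Γ o a := by
  have hr : (FreeGroup.of a * FreeGroup.of b * (FreeGroup.of a)⁻¹ * (FreeGroup.of b)⁻¹ :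
      FreeGroup V) ∈ gpRels Γ o := Or.inl ⟨a, b, h, rfl⟩
  have h1 : (QuotientGroup.mk (FreeGroup.of a * FreeGroup.of b * (FreeGroup.of a)⁻¹ *
      (FreeGroup.of b)⁻¹) : GP Γ o) = 1 :=
    (QuotientGroup.eq_one_iff _).mpr (Subgroup.subset_normalClosure hr)
  have h2 : gen Γ o a * gen Γ o b * (gen Γ o a)⁻¹ * (gen Γ o b)⁻¹ = 1 := by
    exact h1
  rw [← commutatorElement_def] at h2
  exact commutatorElement_eq_one_iff_mul_comm.mp h2

lemma conj_conj_comm {G : Type*} [Group G] {x y : G} (h : x * y = y * x) (g : G) :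
    y * (x * g * x⁻¹) * y⁻¹ = x * (y * g * y⁻¹) * x⁻¹ := by
  calc y * (x * g * x⁻¹) * y⁻¹ = (y * x) * g * (y * x)⁻¹ := by group
    _ = (x * y) * g * (x * y)⁻¹ := by rw [h]
    _ = x * (y * g * y⁻¹) * x⁻¹ := by group

lemma pc_comm_gen {Γ : SimpleGraph V} {o : V → ℕ} (α β : MulAut (GP Γ o))
    (a b : V) (C D : Set V) (hα : IsPC Γ o α a C) (hβ : IsPC Γ o β b D)
    (haD : a ∉ D) (hbC : b ∉ C)
    (hcomm : ∀ z, z ∈ C → z ∈ D → gen Γ o a * gen Γ o b = gen Γ o b * gen Γ o a)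
    (z : V) : α (β (gen Γ o z)) = β (α (gen Γ o z)) := by
  by_cases hzC : z ∈ C <;> by_cases hzD : z ∈ D
  · rw [hβ.1 z hzD, hα.1 z hzC]
    simp only [map_mul, map_inv]
    rw [hα.2 b hbC, hα.1 z hzC, hβ.2 a haD, hβ.1 z hzD]
    exact (conj_conj_comm (hcomm z hzC hzD).symm (gen Γ o z)).symm
  · rw [hβ.2 z hzD, hα.1 z hzC]
    simp only [map_mul, map_inv]
    rw [hβ.2 a haD, hβ.2 z hzD]
  · rw [hα.2 z hzC, hβ.1 z hzD]
    simp only [map_mul, map_inv]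
    rw [hα.2 b hbC, hα.2 z hzC]
  · rw [hα.2 z hzC, hβ.2 z hzD, hα.2 z hzC]


/-- Sufficient criteria for two partial conjugations `π^a_C` and `π^b_D` to commute in
`Aut(𝒢)`: `a = b` with `C ∩ D = ∅`, or `({a} ∪ C) ∩ ({b} ∪ D) = ∅`, or `a` and `b` commute in
`𝒢` (they are adjacent or equal) with `C = D`. -/
theorem partial_conjugations_commute_criteria (Γ : SimpleGraph V) (o : V → ℕ)
    (a b : V) (C D : Set V)
    (hC : IsUnionComponents Γ a C) (hD : IsUnionComponents Γ b D)
    (α β : MulAut (GP Γ o))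
    (hα : IsPC Γ o α a C) (hβ : IsPC Γ o β b D)
    (hne : a ≠ b ∨ C ≠ D)
    (hcases : (a = b ∧ C ∩ D = ∅) ∨
        ((insert a C) ∩ (insert b D) = ∅) ∨
        ((Γ.Adj a b ∨ a = b) ∧ C = D)) :
    α * β = β * α := by
  have haC : a ∉ C := fun h =>
    Set.eq_empty_iff_forall_notMem.mp hC.1 a ⟨h, Set.mem_insert a _⟩
  have hbD : b ∉ D := fun h =>
    Set.eq_empty_iff_forall_notMem.mp hD.1 b ⟨h, Set.mem_insert b _⟩
  have key : ∀ z : V, α (β (gen Γ o z)) = β (α (gen Γ o z)) := by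
    rcases hcases with ⟨hab, hCD⟩ | h2 | ⟨hadj, hCD⟩
    · subst hab
      exact pc_comm_gen α β a a C D hα hβ hbD haC
        (fun z hzC hzD => absurd ⟨hzC, hzD⟩ (Set.eq_empty_iff_forall_notMem.mp hCD z))
    · have haD : a ∉ D := fun h => Set.eq_empty_iff_forall_notMem.mp h2 a
        ⟨Set.mem_insert a _, Set.mem_insert_of_mem _ h⟩
      have hbC : b ∉ C := fun h => Set.eq_empty_iff_forall_notMem.mp h2 b
        ⟨Set.mem_insert_of_mem _ h, Set.mem_insert b _⟩
      exact pc_comm_gen α β a b C D hα hβ haD hbC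
        (fun z hzC hzD => absurd (Set.eq_empty_iff_forall_notMem.mp h2 z)
          (by simp [Set.mem_insert_of_mem _ hzC, Set.mem_insert_of_mem _ hzD]))
    · have hadj' : Γ.Adj a b := by
        rcases hadj with h | h
        · exact h
        · exact absurd (by subst h; subst hCD; rcases hne with h | h <;> simp at h) id
      subst hCD
      have haD : a ∉ C := haC
      have hbC : b ∉ C := fun h =>
        Set.eq_empty_iff_forall_notMem.mp hD.1 b ⟨h, Set.mem_insert b _⟩
      exact pc_comm_gen α β a b C C hα hβ
        (fun h => Set.eq_empty_iff_forall_notMem.mp hD.1 a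
          ⟨h, Set.mem_insert_of_mem _ hadj'.symm⟩)
        (fun h => Set.eq_empty_iff_forall_notMem.mp hC.1 b
          ⟨h, Set.mem_insert_of_mem _ hadj'⟩)
        (fun z _ _ => gen_comm_s15 hadj')
  have heq : (α.toMonoidHom.comp β.toMonoidHom : GP Γ o →* GP Γ o)
      = β.toMonoidHom.comp α.toMonoidHom :=
    gp_hom_ext _ _ (by intro v; simpa using key v)
  ext x
  have := DFunLike.congr_fun heq x
  simpa using this
end
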